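/- Let A be an associative algebra over a field K with a direct sum decomposition into K-subspaces A = A₁ ⊕ A₂ where A₁ is a subalgebra, with projections P₁, P₂, and let N₁ : A₁ → A₁ be a Nijenhuis tensor on the subalgebra A₁. Then the extension N : A → A, N(A) = N₁(P₁(A)), is a Nijenhuis tensor on A if and only if for all A₁, B₁ ∈ A₁ and A₂, B₂ ∈ A₂: (i) N₁²(P₁(A₂·B₂)) = 0, (ii) N₁( P₁(N₁(A₁)·B₂) − N₁(P₁(A₁·B₂)) ) = 0, and (iii) N₁( P₁(A₂·N₁(B₁)) − N₁(P₁(A₂·B₁)) ) = 0. In particular, N is a Nijenhuis tensor on A whenever A₂ is a two-sided ideal of A. -/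

import Mathlib

/-- Let `A = A₁ ⊕ A₂` with `A₁` a subalgebra (with induced product `mul₁`), and
let `N₁ : A₁ → A₁` be a Nijenhuis tensor on `A₁`. Then the extension
`N(A) = N₁(P₁(A))` is a Nijenhuis tensor on `A` iff the three conditions
(i) `N₁²(P₁(A₂B₂)) = 0`, (ii) `N₁(P₁(N₁(A₁)B₂) − N₁(P₁(A₁B₂))) = 0`,
(iii) `N₁(P₁(A₂N₁(B₁)) − N₁(P₁(A₂B₁))) = 0` hold; in particular `N` is a
Nijenhuis tensor whenever `A₂` is a two-sided ideal. -/
theorem extension_nijenhuis_iff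
    {K A : Type*} [Field K] [NonUnitalRing A] [Module K A]
    [SMulCommClass K A A] [IsScalarTower K A A]
    (A₁ A₂ : Submodule K A) (hc : IsCompl A₁ A₂)
    (h₁ : ∀ x y : A, x ∈ A₁ → y ∈ A₁ → x * y ∈ A₁)
    (mul₁ : A₁ → A₁ → A₁)
    (hmul₁ : ∀ x y : A₁, (mul₁ x y : A) = (x : A) * (y : A))
    (N₁ : A₁ →ₗ[K] A₁)
    (hN₁ : ∀ x y : A₁,
      N₁ (mul₁ (N₁ x) y + mul₁ x (N₁ y) - N₁ (mul₁ x y)) = mul₁ (N₁ x) (N₁ y))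
    (p₁ : A →ₗ[K] A₁) (hp₁ : p₁ = A₁.linearProjOfIsCompl A₂ hc)
    (N : A →ₗ[K] A) (hN : N = A₁.subtype ∘ₗ N₁ ∘ₗ p₁) :
    ((∀ a b : A, N (N a * b + a * N b - N (a * b)) = N a * N b) ↔
      ((∀ x y : A₂, N₁ (N₁ (p₁ ((x : A) * (y : A)))) = 0) ∧
       (∀ a : A₁, ∀ y : A₂,
         N₁ (p₁ ((N₁ a : A) * (y : A)) - N₁ (p₁ ((a : A) * (y : A)))) = 0) ∧
       (∀ x : A₂, ∀ b : A₁,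
         N₁ (p₁ ((x : A) * (N₁ b : A)) - N₁ (p₁ ((x : A) * (b : A)))) = 0))) ∧
    ((∀ x ∈ A₂, ∀ a : A, a * x ∈ A₂ ∧ x * a ∈ A₂) →
      ∀ a b : A, N (N a * b + a * N b - N (a * b)) = N a * N b) := by
  have pl : ∀ x : A₁, p₁ (x : A) = x := by
    intro x; rw [hp₁]; exact Submodule.linearProjOfIsCompl_apply_left hc x
  have pr : ∀ x : A, x ∈ A₂ → p₁ x = 0 := by
    intro x hx; rw [hp₁]; exact Submodule.linearProjOfIsCompl_apply_right' hc hx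
  have hNa : ∀ a : A, N a = ↑(N₁ (p₁ a)) := by intro a; rw [hN]; rfl
  have pmul : ∀ x y : A₁, p₁ ((x : A) * (y : A)) = mul₁ x y := by
    intro x y; rw [← hmul₁, pl]
  have key : ∀ (a₁ b₁ : A₁) (a₂ b₂ : A), a₂ ∈ A₂ → b₂ ∈ A₂ →
      N (N ((a₁ : A) + a₂) * ((b₁ : A) + b₂) + ((a₁ : A) + a₂) * N ((b₁ : A) + b₂)
          - N (((a₁ : A) + a₂) * ((b₁ : A) + b₂)))
        - N ((a₁ : A) + a₂) * N ((b₁ : A) + b₂)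
      = ↑(N₁ (p₁ ((N₁ a₁ : A) * b₂) - N₁ (p₁ ((a₁ : A) * b₂))))
        + ↑(N₁ (p₁ (a₂ * (N₁ b₁ : A)) - N₁ (p₁ (a₂ * (b₁ : A)))))
        - ↑(N₁ (N₁ (p₁ (a₂ * b₂)))) := by
    intro a₁ b₁ a₂ b₂ ha hb
    have e1 : p₁ ((a₁ : A) + a₂) = a₁ := by rw [map_add, pl, pr _ ha, add_zero]
    have e2 : p₁ ((b₁ : A) + b₂) = b₁ := by rw [map_add, pl, pr _ hb, add_zero]
    have eab : p₁ (((a₁ : A) + a₂) * ((b₁ : A) + b₂))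
        = mul₁ a₁ b₁ + p₁ ((a₁ : A) * b₂) + p₁ (a₂ * (b₁ : A)) + p₁ (a₂ * b₂) := by
      rw [add_mul, mul_add, mul_add, map_add, map_add, map_add, pmul]
      abel
    rw [hNa (((a₁ : A) + a₂) * ((b₁ : A) + b₂)), eab,
        hNa ((a₁ : A) + a₂), hNa ((b₁ : A) + b₂), e1, e2, hNa]
    have earg : p₁ ((N₁ a₁ : A) * ((b₁ : A) + b₂) + ((a₁ : A) + a₂) * (N₁ b₁ : A)
          - ↑(N₁ (mul₁ a₁ b₁ + p₁ ((a₁ : A) * b₂) + p₁ (a₂ * (b₁ : A)) + p₁ (a₂ * b₂))))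
        = (mul₁ (N₁ a₁) b₁ + mul₁ a₁ (N₁ b₁) - N₁ (mul₁ a₁ b₁))
          + ((p₁ ((N₁ a₁ : A) * b₂) - N₁ (p₁ ((a₁ : A) * b₂)))
            + (p₁ (a₂ * (N₁ b₁ : A)) - N₁ (p₁ (a₂ * (b₁ : A))))
            - N₁ (p₁ (a₂ * b₂))) := by
      rw [map_sub, map_add, mul_add, add_mul, map_add, map_add, pmul, pmul, pl,
          map_add, map_add, map_add]
      abel
    rw [earg, map_add, hN₁, map_sub, map_add, map_sub, map_sub]
    push_cast [hmul₁]
    abel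
  have a2mem : ∀ a : A, a - ↑(p₁ a) ∈ A₂ := by
    intro a
    have : p₁ (a - ↑(p₁ a)) = 0 := by rw [map_sub, pl, sub_self]
    have hk : LinearMap.ker p₁ = A₂ := by
      rw [hp₁]; exact Submodule.linearProjOfIsCompl_ker hc
    rw [← hk]; exact this
  have mpr :
      ((∀ x y : A₂, N₁ (N₁ (p₁ ((x : A) * (y : A)))) = 0) ∧
       (∀ a : A₁, ∀ y : A₂,
         N₁ (p₁ ((N₁ a : A) * (y : A)) - N₁ (p₁ ((a : A) * (y : A)))) = 0) ∧
       (∀ x : A₂, ∀ b : A₁,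
         N₁ (p₁ ((x : A) * (N₁ b : A)) - N₁ (p₁ ((x : A) * (b : A)))) = 0)) →
      ∀ a b : A, N (N a * b + a * N b - N (a * b)) = N a * N b := by
    rintro ⟨c1, c2, c3⟩ a b
    have hd : ∀ c : A, c = ↑(p₁ c) + (c - ↑(p₁ c)) := fun c => by abel
    have := key (p₁ a) (p₁ b) (a - ↑(p₁ a)) (b - ↑(p₁ b)) (a2mem a) (a2mem b)
    rw [← hd a, ← hd b] at this
    have h1 := c1 ⟨a - ↑(p₁ a), a2mem a⟩ ⟨b - ↑(p₁ b), a2mem b⟩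
    have h2 := c2 (p₁ a) ⟨b - ↑(p₁ b), a2mem b⟩
    have h3 := c3 ⟨a - ↑(p₁ a), a2mem a⟩ (p₁ b)
    simp only [Submodule.coe_mk] at h1 h2 h3
    rw [h1, h2, h3] at this
    simp only [ZeroMemClass.coe_zero, add_zero, zero_add, sub_zero] at this
    exact sub_eq_zero.mp this
  constructor
  · constructor
    · intro h
      refine ⟨?_, ?_, ?_⟩
      · intro x y
        have := key 0 0 x y x.2 y.2
        rw [h] at this
        simp only [ZeroMemClass.coe_zero, zero_add, map_zero, mul_zero, zero_mul,
          zero_sub, sub_zero, sub_self, map_zero] at this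
        have := this.symm
        rw [neg_eq_zero] at this
        exact_mod_cast this
      · intro a y
        have := key a 0 0 y (Submodule.zero_mem A₂) y.2
        rw [h] at this
        simp only [ZeroMemClass.coe_zero, add_zero, zero_add, map_zero, mul_zero,
          zero_mul, sub_zero, sub_self] at this
        have := this.symm
        exact_mod_cast this
      · intro x b
        have := key 0 b x 0 x.2 (Submodule.zero_mem A₂)
        rw [h] at this
        simp only [ZeroMemClass.coe_zero, add_zero, zero_add, map_zero, mul_zero,
          zero_mul, sub_zero, sub_self] at this
        have := this.symm
        exact_mod_cast this
    · exact mpr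
  · intro hI a b
    have conds :
        (∀ x y : A₂, N₁ (N₁ (p₁ ((x : A) * (y : A)))) = 0) ∧
        (∀ a : A₁, ∀ y : A₂,
          N₁ (p₁ ((N₁ a : A) * (y : A)) - N₁ (p₁ ((a : A) * (y : A)))) = 0) ∧
        (∀ x : A₂, ∀ b : A₁,
          N₁ (p₁ ((x : A) * (N₁ b : A)) - N₁ (p₁ ((x : A) * (b : A)))) = 0) := by
      refine ⟨?_, ?_, ?_⟩
      · intro x y
        rw [pr _ ((hI (y : A) y.2 (x : A)).1), map_zero, map_zero]
      · intro a y
        rw [pr _ ((hI (y : A) y.2 ((N₁ a : A))).1), pr _ ((hI (y : A) y.2 ((a : A))).1),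
          map_zero, sub_zero, map_zero]
      · intro x b
        rw [pr _ ((hI (x : A) x.2 ((N₁ b : A))).2), pr _ ((hI (x : A) x.2 ((b : A))).2),
          map_zero, sub_zero, map_zero]
    exact mpr conds a b
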